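/- Let d, N be positive integers, let ρ_1, …, ρ_N be density matrices on ℂ^d, and let {E_x}_{x=1}^N be a POVM with N outcomes on ℂ^d. Then the average success probability satisfies (1/N) · Σ_{x=1}^N tr(E_x ρ_x) ≤ d/N. -/

import Mathlib

open Matrix ComplexOrder

lemma aux_trace_re_nonneg {d : ℕ} {A : Matrix (Fin d) (Fin d) ℂ} (hA : A.PosSemidef) :
    0 ≤ (A.trace).re := by
  rw [Matrix.trace]
  have h : ∀ i, 0 ≤ (A i i).re := by
    intro i
    have := hA.dotProduct_mulVec_nonneg (Pi.single i 1)
    have h2 : star (Pi.single i (1:ℂ)) ⬝ᵥ A *ᵥ Pi.single i 1 = A i i := by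
      simp [Matrix.mulVec_single, dotProduct, Pi.single_apply, Finset.sum_ite_eq']
    rw [h2] at this
    exact (Complex.le_def.mp this).1
  have : (0:ℝ) ≤ ∑ i, (A i i).re := Finset.sum_nonneg fun i _ => h i
  simpa [Complex.re_sum] using this

lemma aux_trace_mul_re_nonneg {d : ℕ} {A B : Matrix (Fin d) (Fin d) ℂ}
    (hA : A.PosSemidef) (hB : B.PosSemidef) : 0 ≤ ((A * B).trace).re := by
  obtain ⟨C, rfl⟩ : ∃ C : Matrix (Fin d) (Fin d) ℂ, A = Cᴴ * C := by
    open scoped MatrixOrder in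
    obtain ⟨X, hX, -, hXA⟩ := CFC.exists_sqrt_of_isSelfAdjoint_of_quasispectrumRestricts
      hA.isHermitian (QuasispectrumRestricts.nnreal_of_nonneg hA.nonneg)
    exact ⟨X, by rw [← hXA]; congr 1; exact hX.star_eq.symm⟩
  rw [show (Cᴴ * C * B).trace = (C * B * Cᴴ).trace from (Matrix.trace_mul_cycle C B Cᴴ).symm]
  exact aux_trace_re_nonneg (hB.mul_mul_conjTranspose_same C)

lemma aux_one_sub_psd {d : ℕ} {ρ : Matrix (Fin d) (Fin d) ℂ}
    (hρ : ρ.PosSemidef) (htr : ρ.trace = 1) : (1 - ρ).PosSemidef := by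
  have hH := hρ.1
  set U : Matrix (Fin d) (Fin d) ℂ := (hH.eigenvectorUnitary : Matrix (Fin d) (Fin d) ℂ) with hU
  have hUU : U * star U = 1 := Matrix.mem_unitaryGroup_iff.mp hH.eigenvectorUnitary.2
  have hUU' : star U * U = 1 := Matrix.mem_unitaryGroup_iff'.mp hH.eigenvectorUnitary.2
  have hspec : ρ = U * Matrix.diagonal (RCLike.ofReal ∘ hH.eigenvalues) * star U :=
    hH.spectral_theorem
  -- sum of eigenvalues = 1
  have htrD : (Matrix.diagonal (RCLike.ofReal ∘ hH.eigenvalues) : Matrix (Fin d) (Fin d) ℂ).trace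
      = 1 := by
    calc (Matrix.diagonal (RCLike.ofReal ∘ hH.eigenvalues) : Matrix (Fin d) (Fin d) ℂ).trace
        = (U * Matrix.diagonal (RCLike.ofReal ∘ hH.eigenvalues) * star U).trace := by
          rw [Matrix.trace_mul_cycle, hUU', Matrix.one_mul]
      _ = ρ.trace := by rw [← hspec]
      _ = 1 := htr
  have hsum : ∑ i, hH.eigenvalues i = 1 := by
    have : ((∑ i, hH.eigenvalues i : ℝ) : ℂ) = 1 := by
      push_cast [← htrD, Matrix.trace_diagonal]
      rfl
    exact_mod_cast this
  have heig_le : ∀ i, hH.eigenvalues i ≤ 1 := by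
    intro i
    rw [← hsum]
    exact Finset.single_le_sum (fun j _ => hρ.eigenvalues_nonneg j) (Finset.mem_univ i)
  have key : (1 : Matrix (Fin d) (Fin d) ℂ) - ρ
      = U * Matrix.diagonal (RCLike.ofReal ∘ fun i => 1 - hH.eigenvalues i) * star U := by
    have h1 : (1 : Matrix (Fin d) (Fin d) ℂ) = U * 1 * star U := by
      rw [Matrix.mul_one, hUU]
    calc (1 : Matrix (Fin d) (Fin d) ℂ) - ρ
        = U * 1 * star U - U * Matrix.diagonal (RCLike.ofReal ∘ hH.eigenvalues) * star U := by
          rw [← h1, ← hspec]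
      _ = U * (1 - Matrix.diagonal (RCLike.ofReal ∘ hH.eigenvalues)) * star U := by
          rw [Matrix.mul_sub, Matrix.sub_mul]
      _ = U * Matrix.diagonal (RCLike.ofReal ∘ fun i => 1 - hH.eigenvalues i) * star U := by
          congr 1
          congr 1
          rw [← Matrix.diagonal_one, Matrix.diagonal_sub]
          congr 1
          ext i
          simp [Function.comp, Complex.ofReal_sub]
  rw [key]
  have hdiag : (Matrix.diagonal (RCLike.ofReal ∘ fun i => 1 - hH.eigenvalues i) :
      Matrix (Fin d) (Fin d) ℂ).PosSemidef := by
    refine Matrix.posSemidef_diagonal_iff.mpr fun i => ?_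
    simp only [Function.comp_apply]
    have h0 : (0:ℝ) ≤ 1 - hH.eigenvalues i := by linarith [heig_le i]
    exact Complex.zero_le_real.mpr h0
  have := hdiag.mul_mul_conjTranspose_same U
  exact this

/-- **Strong converse for the identity channel.**
If `N` messages are encoded into density matrices `ρ x` on `ℂ^d` and decoded with a POVM
`{E x}`, the average success probability is at most `d / N`. -/
theorem strong_converse_identity_channel
    (d N : ℕ) (hd : 0 < d) (hN : 0 < N)
    (ρ : Fin N → Matrix (Fin d) (Fin d) ℂ)
    (hρ_psd : ∀ x, (ρ x).PosSemidef) (hρ_tr : ∀ x, (ρ x).trace = 1)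
    (E : Fin N → Matrix (Fin d) (Fin d) ℂ)
    (hE_psd : ∀ x, (E x).PosSemidef) (hE_sum : ∑ x, E x = 1) :
    (1 / N : ℝ) * ∑ x, ((E x * ρ x).trace).re ≤ (d : ℝ) / N := by
  have hstep : ∀ x, ((E x * ρ x).trace).re ≤ ((E x).trace).re := by
    intro x
    have hpsd : 0 ≤ ((E x * (1 - ρ x)).trace).re :=
      aux_trace_mul_re_nonneg (hE_psd x) (aux_one_sub_psd (hρ_psd x) (hρ_tr x))
    have hexp : (E x * (1 - ρ x)).trace = (E x).trace - (E x * ρ x).trace := by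
      rw [Matrix.mul_sub, Matrix.mul_one]
      exact Matrix.trace_sub _ _
    rw [hexp] at hpsd
    simp only [Complex.sub_re] at hpsd
    linarith
  have hsum : ∑ x, ((E x * ρ x).trace).re ≤ (d : ℝ) := by
    calc ∑ x, ((E x * ρ x).trace).re ≤ ∑ x, ((E x).trace).re :=
          Finset.sum_le_sum fun x _ => hstep x
      _ = ((∑ x, E x).trace).re := by
          rw [Matrix.trace_sum]
          simp [Complex.re_sum]
      _ = (d : ℝ) := by rw [hE_sum]; simp [Matrix.trace_one]
  have hN' : (0:ℝ) < N := by exact_mod_cast hN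
  calc (1 / N : ℝ) * ∑ x, ((E x * ρ x).trace).re = (∑ x, ((E x * ρ x).trace).re) / N := by ring
    _ ≤ (d : ℝ) / N := by gcongr
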